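/- Let (a_n) be a sequence of positive reals and p : ℕ → ℕ a nondecreasing sequence tending to infinity, such that a_n · exp(u · p(n)) → 0 for every u ≥ 0. Let (Y_n) be a sequence of random variables with sup_n E[Y_n²] < ∞. Then E[log(1 + a_n · exp(p(n) · Y_n))] / p(n) → 0 as n → ∞. -/

import Mathlib

open MeasureTheory Filter

/-- Pointwise bound: `log (1 + a e^{ct}) ≤ a e^{uc} + log (1+a) + c t² / u`. -/
lemma e_log_pointwise (a u t c : ℝ) (ha : 0 < a) (hu : 0 < u) (hc : 0 ≤ c) :
    Real.log (1 + a * Real.exp (c * t)) ≤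
      a * Real.exp (u * c) + Real.log (1 + a) + c * t ^ 2 / u := by
  have hla : 0 ≤ Real.log (1 + a) := Real.log_nonneg (by linarith)
  rcases le_or_gt t u with h | h
  · have h1 : Real.log (1 + a * Real.exp (c * t)) ≤ Real.log (1 + a * Real.exp (c * u)) := by
      apply Real.log_le_log (by positivity)
      have := Real.exp_le_exp.2 (mul_le_mul_of_nonneg_left h hc)
      nlinarith
    have h2 : Real.log (1 + a * Real.exp (c * u)) ≤ a * Real.exp (c * u) := by
      have := Real.log_le_sub_one_of_pos (x := 1 + a * Real.exp (c * u)) (by positivity)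
      linarith
    have h3 : 0 ≤ c * t ^ 2 / u := by positivity
    rw [mul_comm u c]
    linarith
  · have ht : 0 < t := hu.trans h
    have hexp : (1 : ℝ) ≤ Real.exp (c * t) := Real.one_le_exp (by positivity)
    have h1 : Real.log (1 + a * Real.exp (c * t)) ≤
        Real.log ((1 + a) * Real.exp (c * t)) := by
      apply Real.log_le_log (by positivity)
      nlinarith
    rw [Real.log_mul (by positivity) (Real.exp_ne_zero _), Real.log_exp] at h1
    have h2 : c * t ≤ c * t ^ 2 / u := by
      rw [le_div_iff₀ hu]
      nlinarith [mul_nonneg hc (mul_nonneg ht.le (sub_nonneg.2 h.le))]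
    have h3 : 0 ≤ a * Real.exp (u * c) := by positivity
    linarith

theorem e_log_lemma
    {Ω : Type*} [MeasurableSpace Ω] (μ : Measure Ω) [IsProbabilityMeasure μ]
    (a : ℕ → ℝ) (ha : ∀ n, 0 < a n)
    (p : ℕ → ℕ) (hp_mono : Monotone p) (hp_top : Tendsto (fun n => (p n : ℝ)) atTop atTop)
    (ha_dom : ∀ u : ℝ, 0 ≤ u →
      Tendsto (fun n => a n * Real.exp (u * p n)) atTop (nhds 0))
    (Y : ℕ → Ω → ℝ) (hY : ∀ n, Measurable (Y n))
    (hYint : ∀ n, Integrable (fun ω => (Y n ω) ^ 2) μ)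
    (M : ℝ) (hM : ∀ n, ∫ ω, (Y n ω) ^ 2 ∂μ ≤ M) :
    Tendsto
      (fun n => (∫ ω, Real.log (1 + a n * Real.exp ((p n : ℝ) * Y n ω)) ∂μ) / (p n : ℝ))
      atTop (nhds 0) := by
  have hM0 : 0 ≤ M := le_trans (integral_nonneg fun ω => sq_nonneg _) (hM 0)
  -- measurability and integrability of the integrand
  have hmeas : ∀ n, Measurable (fun ω => Real.log (1 + a n * Real.exp ((p n : ℝ) * Y n ω))) :=
    fun n => (measurable_const.add (((hY n).const_mul _).exp.const_mul _)).log
  have hnonneg : ∀ n ω, 0 ≤ Real.log (1 + a n * Real.exp ((p n : ℝ) * Y n ω)) := by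
    intro n ω
    apply Real.log_nonneg
    have : 0 < a n * Real.exp ((p n : ℝ) * Y n ω) := mul_pos (ha n) (Real.exp_pos _)
    linarith
  have hint : ∀ n, Integrable
      (fun ω => Real.log (1 + a n * Real.exp ((p n : ℝ) * Y n ω))) μ := by
    intro n
    apply Integrable.mono'
      (g := fun ω => a n * Real.exp (1 * (p n : ℝ)) + Real.log (1 + a n)
        + (p n : ℝ) * (Y n ω) ^ 2 / 1)
    · exact (integrable_const _).add
        (((hYint n).const_mul ((p n : ℝ))).div_const 1)
    · exact (hmeas n).aestronglyMeasurable
    · filter_upwards with ω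
      rw [Real.norm_eq_abs, abs_of_nonneg (hnonneg n ω)]
      exact e_log_pointwise (a n) 1 (Y n ω) (p n) (ha n) one_pos (Nat.cast_nonneg _)
  -- integral bound for general u > 0
  have hIbound : ∀ (u : ℝ), 0 < u → ∀ n,
      (∫ ω, Real.log (1 + a n * Real.exp ((p n : ℝ) * Y n ω)) ∂μ) ≤
        a n * Real.exp (u * p n) + Real.log (1 + a n) + (p n : ℝ) * M / u := by
    intro u hu n
    have h1 : (∫ ω, Real.log (1 + a n * Real.exp ((p n : ℝ) * Y n ω)) ∂μ) ≤
        ∫ ω, (a n * Real.exp (u * p n) + Real.log (1 + a n)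
          + (p n : ℝ) * (Y n ω) ^ 2 / u) ∂μ := by
      apply integral_mono (hint n)
      · exact (integrable_const _).add
          (((hYint n).const_mul ((p n : ℝ))).div_const u)
      · intro ω
        exact e_log_pointwise (a n) u (Y n ω) (p n) (ha n) hu (Nat.cast_nonneg _)
    have h2 : ∫ ω, (a n * Real.exp (u * p n) + Real.log (1 + a n)
          + (p n : ℝ) * (Y n ω) ^ 2 / u) ∂μ
        = (a n * Real.exp (u * p n) + Real.log (1 + a n))
          + ((p n : ℝ) / u) * ∫ ω, (Y n ω) ^ 2 ∂μ := by
      rw [integral_add (integrable_const _)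
        (((hYint n).const_mul ((p n : ℝ))).div_const u)]
      simp only [integral_const, measure_univ, ENNReal.toReal_one, probReal_univ, one_smul]
      congr 1
      rw [← integral_const_mul]
      congr 1
      ext ω
      ring
    have h3 : ((p n : ℝ) / u) * ∫ ω, (Y n ω) ^ 2 ∂μ ≤ (p n : ℝ) * M / u := by
      rw [div_mul_eq_mul_div, mul_div_assoc, mul_div_assoc]
      exact mul_le_mul_of_nonneg_left
        (div_le_div_of_nonneg_right (hM n) hu.le) (Nat.cast_nonneg _)
    linarith [h1, h2.le, h3, h2.ge]
  -- the integral is nonnegative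
  have hInn : ∀ n, 0 ≤ ∫ ω, Real.log (1 + a n * Real.exp ((p n : ℝ) * Y n ω)) ∂μ :=
    fun n => integral_nonneg (hnonneg n)
  -- a n → 0
  have ha0 : Tendsto a atTop (nhds 0) := by
    have := ha_dom 0 le_rfl
    simpa using this
  rw [NormedAddCommGroup.tendsto_nhds_zero]
  intro ε hε
  set u : ℝ := max (3 * M / ε) 1 with hu_def
  have hu : 0 < u := lt_of_lt_of_le one_pos (le_max_right _ _)
  have hMu : M / u ≤ ε / 3 := by
    rw [div_le_iff₀ hu]
    have h1 : 3 * M / ε ≤ u := le_max_left _ _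
    calc M = (ε / 3) * (3 * M / ε) := by field_simp
    _ ≤ (ε / 3) * u := by
        apply mul_le_mul_of_nonneg_left h1 (by positivity)
    _ = ε / 3 * u := rfl
  have hev1 : ∀ᶠ n in atTop, a n * Real.exp (u * p n) < ε / 3 :=
    (ha_dom u hu.le).eventually_lt_const (by positivity)
  have hev2 : ∀ᶠ n in atTop, (1 : ℝ) ≤ (p n : ℝ) := hp_top.eventually_ge_atTop 1
  have hev3 : ∀ᶠ n in atTop, a n < ε / 3 := ha0.eventually_lt_const (by positivity)
  filter_upwards [hev1, hev2, hev3] with n h1 h2 h3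
  have hpn : (0 : ℝ) < (p n : ℝ) := lt_of_lt_of_le one_pos h2
  set I := ∫ ω, Real.log (1 + a n * Real.exp ((p n : ℝ) * Y n ω)) ∂μ with hI
  have hlog : Real.log (1 + a n) ≤ a n := by
    have := Real.log_le_sub_one_of_pos (x := 1 + a n) (by linarith [ha n])
    linarith
  have hbd : I ≤ a n * Real.exp (u * p n) + Real.log (1 + a n) + (p n : ℝ) * M / u :=
    hIbound u hu n
  have hkey : I < ε * (p n : ℝ) := by
    have e1 : a n * Real.exp (u * p n) ≤ (ε / 3) * (p n : ℝ) := by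
      calc a n * Real.exp (u * p n) ≤ ε / 3 := h1.le
      _ = (ε / 3) * 1 := by ring
      _ ≤ (ε / 3) * (p n : ℝ) := by
          apply mul_le_mul_of_nonneg_left h2 (by positivity)
    have e2 : Real.log (1 + a n) < (ε / 3) * (p n : ℝ) := by
      calc Real.log (1 + a n) ≤ a n := hlog
      _ < ε / 3 := h3
      _ = (ε / 3) * 1 := by ring
      _ ≤ (ε / 3) * (p n : ℝ) := by
          apply mul_le_mul_of_nonneg_left h2 (by positivity)
    have e3 : (p n : ℝ) * M / u ≤ (ε / 3) * (p n : ℝ) := by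
      rw [mul_div_assoc]
      calc (p n : ℝ) * (M / u) ≤ (p n : ℝ) * (ε / 3) :=
        mul_le_mul_of_nonneg_left hMu (Nat.cast_nonneg _)
      _ = (ε / 3) * (p n : ℝ) := by ring
    have : a n * Real.exp (u * p n) < (ε / 3) * (p n : ℝ) ∨ True := Or.inr trivial
    nlinarith [hbd, e1, e2, e3]
  have hnn : 0 ≤ I / (p n : ℝ) := div_nonneg (hInn n) hpn.le
  rw [Real.norm_eq_abs, abs_of_nonneg hnn, div_lt_iff₀ hpn]
  linarith
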